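/- Lambert-W optimization identity for the smoothness bound: Let γ ∈ [0,1) and set c := (2−γ)/(1−γ). Then there exists a unique real y > 1 with y − ln y = c; moreover, setting α := 1/(y − c), one has α > 0, e^{−1/α} = 1/y, and (1 + α − γ)/(α·(1 − e^{−1/α})) = (1−γ)·y. (Equivalently, y = −W_{−1}(−e^{−c}), so the optimized coarse correlated price of anarchy bound equals −(1−γ)·W_{−1}(−e^{−(2−γ)/(1−γ)}).) -/

import Mathlib

private lemma strictMonoHelp : ∀ a b : ℝ, 1 ≤ a → a < b →
    a - Real.log a < b - Real.log b := by
  intro a b ha hab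
  have ha0 : (0:ℝ) < a := by linarith
  have hb0 : (0:ℝ) < b := by linarith
  have hne : b / a ≠ 1 := by
    intro h
    have : b = a := by field_simp at h; linarith
    linarith
  have h1 : Real.log (b / a) < b / a - 1 :=
    Real.log_lt_sub_one_of_pos (by positivity) hne
  have h2 : b / a - 1 = (b - a) / a := by field_simp
  have h3 : (b - a) / a ≤ b - a := div_le_self (by linarith) ha
  have h4 : Real.log (b / a) = Real.log b - Real.log a :=
    Real.log_div hb0.ne' ha0.ne'
  linarith

/-- Lambert-W optimization identity for the smoothness bound: for `γ ∈ [0,1)` and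
`c = (2-γ)/(1-γ)` there is a unique `y > 1` with `y - ln y = c`; setting
`α = 1/(y - c)` one has `α > 0`, `e^{-1/α} = 1/y`, and
`(1 + α - γ)/(α·(1 - e^{-1/α})) = (1-γ)·y`.  (Equivalently `y = -W₋₁(-e^{-c})`, so the
optimized coarse correlated price of anarchy bound equals
`-(1-γ)·W₋₁(-e^{-(2-γ)/(1-γ)})`.) -/
theorem lambertW_optimization (γ c : ℝ) (hγ0 : 0 ≤ γ) (hγ1 : γ < 1)
    (hc : c = (2 - γ) / (1 - γ)) :
    ∃ y : ℝ, (1 < y ∧ y - Real.log y = c) ∧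
      (∀ y' : ℝ, 1 < y' → y' - Real.log y' = c → y' = y) ∧
      ∀ α : ℝ, α = 1 / (y - c) →
        0 < α ∧ Real.exp (-1/α) = 1/y ∧
          (1 + α - γ) / (α * (1 - Real.exp (-1/α))) = (1 - γ) * y := by
  have h1γ : 0 < 1 - γ := by linarith
  have hc2 : 2 ≤ c := by
    rw [hc, le_div_iff₀ h1γ]; linarith
  -- existence via IVT on [1, 2c]
  have hcont : ContinuousOn (fun y : ℝ => y - Real.log y) (Set.Icc 1 (2*c)) := by
    apply ContinuousOn.sub continuousOn_id
    apply Real.continuousOn_log.mono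
    intro x hx
    simp only [Set.mem_Icc] at hx
    simp only [Set.mem_compl_iff, Set.mem_singleton_iff]
    linarith [hx.1]
  have hf1 : (fun y : ℝ => y - Real.log y) 1 = 1 := by simp
  have hf2c : c ≤ (fun y : ℝ => y - Real.log y) (2*c) := by
    simp only
    have hlog : Real.log (2*c) ≤ Real.log 2 + (c - 1) := by
      rw [Real.log_mul (by norm_num) (by linarith)]
      have := Real.log_le_sub_one_of_pos (x := c) (by linarith)
      linarith
    have hlog2 : Real.log 2 < 1 := by
      have := Real.log_lt_sub_one_of_pos (x := (2:ℝ)) (by norm_num) (by norm_num)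
      linarith
    linarith
  have hsub := intermediate_value_Icc (a := (1:ℝ)) (b := 2*c) (by linarith) hcont
  have hcmem : c ∈ Set.Icc ((fun y : ℝ => y - Real.log y) 1)
      ((fun y : ℝ => y - Real.log y) (2*c)) := by
    rw [hf1]; exact ⟨by linarith, hf2c⟩
  obtain ⟨y, hy_mem, hy_eq⟩ := hsub hcmem
  simp only [] at hy_eq
  have hy1 : 1 < y := by
    rcases lt_or_eq_of_le hy_mem.1 with h | h
    · exact h
    · exfalso; rw [← h] at hy_eq; simp at hy_eq; linarith
  refine ⟨y, ⟨hy1, hy_eq⟩, ?_, ?_⟩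
  · intro y' hy'1 hy'_eq
    rcases lt_trichotomy y' y with h | h | h
    · exfalso
      have := strictMonoHelp y' y (le_of_lt hy'1) h
      rw [hy'_eq, hy_eq] at this; linarith
    · exact h
    · exfalso
      have := strictMonoHelp y y' (le_of_lt hy1) h
      rw [hy'_eq, hy_eq] at this; linarith
  · intro α hα
    have hy0 : (0:ℝ) < y := by linarith
    have hL : Real.log y = y - c := by linarith
    have hL0 : 0 < Real.log y := Real.log_pos hy1
    have hyc : 0 < y - c := by rw [← hL]; exact hL0
    have hα0 : 0 < α := by rw [hα]; positivity
    have hαL : α = 1 / Real.log y := by rw [hα, hL]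
    have hexp : Real.exp (-1/α) = 1/y := by
      rw [hαL]
      have : -1 / (1 / Real.log y) = -Real.log y := by
        field_simp
      rw [this, Real.exp_neg, Real.exp_log hy0, one_div]
    refine ⟨hα0, hexp, ?_⟩
    rw [hexp, hαL]
    have hkey : (1 - γ) * (y - Real.log y) = 2 - γ := by
      rw [hy_eq, hc]; field_simp
    have hy1' : y - 1 ≠ 0 := by intro h; linarith
    field_simp
    linear_combination (-1) * hkey
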